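/- arXiv:0903.1743 — 2 statements merged into one kernel-verified Lean document; each statement's English description precedes it below -/
import Mathlib

section
/- Let A = {2^{j-1} : j ≥ 1} and σ_1^{(A)}(n) = ∑_{j ≥ 1, 2^{j-1} | n} 2^{j-1} = 2^{v_2(n)+1} - 1, the sum of the powers of 2 dividing n. Then for every n ≥ 1: ∑_{j=1}^{n} (-1)^{s(n-j)} σ_1^{(A)}(j) = (-1)^{s(n)-1} n. -/
set_option linter.unusedVariables false

/-- Binary digit sum: number of ones in the binary expansion of `n`. -/
def binDigitSum (n : ℕ) : ℕ := (Nat.digits 2 n).sum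

/-- `σ_1^{(A)}(n)`, for `A = {2^{j-1} : j ≥ 1}`: the sum of the powers of `2` dividing `n`,
i.e. `2^{v_2(n)+1} - 1`. -/
def sigma1Pow2 (n : ℕ) : ℕ := 2 ^ (padicValNat 2 n + 1) - 1

lemma s_even (m : ℕ) : binDigitSum (2*m) = binDigitSum m := by
  rcases Nat.eq_zero_or_pos m with h | h
  · simp [h, binDigitSum]
  · unfold binDigitSum
    rw [Nat.digits_def' (by norm_num) (by omega)]
    simp [Nat.mul_div_cancel_left, Nat.mul_mod_right]

lemma s_odd (m : ℕ) : binDigitSum (2*m+1) = binDigitSum m + 1 := by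
  unfold binDigitSum
  rw [Nat.digits_def' (by norm_num) (by omega)]
  have h1 : (2*m+1) % 2 = 1 := by omega
  have h2 : (2*m+1) / 2 = m := by omega
  rw [h1, h2]; simp [Nat.add_comm]

lemma sig_odd (m : ℕ) : sigma1Pow2 (2*m+1) = 1 := by
  unfold sigma1Pow2
  have : padicValNat 2 (2*m+1) = 0 := by
    apply padicValNat.eq_zero_of_not_dvd
    omega
  rw [this]; rfl

lemma sig_even (m : ℕ) (hm : 1 ≤ m) : sigma1Pow2 (2*m) = 2 * sigma1Pow2 m + 1 := by
  unfold sigma1Pow2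
  have h2 : padicValNat 2 (2*m) = 1 + padicValNat 2 m := by
    rw [padicValNat.mul (by norm_num) (by omega), padicValNat.self (by norm_num)]
  rw [h2]
  have : 1 ≤ 2 ^ (padicValNat 2 m + 1) := Nat.one_le_two_pow
  rw [show 1 + padicValNat 2 m + 1 = (padicValNat 2 m + 1) + 1 by omega, pow_succ]
  omega

noncomputable def F (n : ℕ) : ℤ :=
  ∑ m ∈ Finset.range n, (-1 : ℤ) ^ binDigitSum m * (sigma1Pow2 (n - m) : ℤ)

lemma sum_range_double (g : ℕ → ℤ) (n : ℕ) :
    ∑ m ∈ Finset.range (2*n), g m = ∑ i ∈ Finset.range n, (g (2*i) + g (2*i+1)) := by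
  induction n with
  | zero => simp
  | succ k ih =>
      rw [show 2*(k+1) = (2*k+1)+1 by ring, Finset.sum_range_succ, Finset.sum_range_succ,
        Finset.sum_range_succ, ih]
      ring

lemma s_zero : binDigitSum 0 = 0 := by simp [binDigitSum]

lemma s_pos (n : ℕ) (hn : 1 ≤ n) : 1 ≤ binDigitSum n := by
  induction n using Nat.strong_induction_on with
  | _ n ih =>
    rcases Nat.even_or_odd n with ⟨m, hm⟩ | ⟨m, hm⟩
    · subst hm
      rw [show m + m = 2*m by ring, s_even]
      exact ih m (by omega) (by omega)
    · subst hm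
      rw [s_odd]; omega

lemma Feven (n : ℕ) (hn : 1 ≤ n) : F (2*n) = 2 * F n := by
  unfold F
  rw [sum_range_double]
  rw [Finset.mul_sum]
  apply Finset.sum_congr rfl
  intro i hi
  simp only [Finset.mem_range] at hi
  have h1 : 2*n - 2*i = 2*(n-i) := by omega
  have h2 : 2*n - (2*i+1) = 2*(n-i-1)+1 := by omega
  rw [h1, h2, s_even, s_odd, sig_even (n-i) (by omega), sig_odd]
  push_cast
  ring

lemma Fodd (n : ℕ) : F (2*n+1) = (-1 : ℤ) ^ binDigitSum n - 2 * F n := by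
  unfold F
  rw [Finset.sum_range_succ, sum_range_double]
  have hlast : 2*n+1 - 2*n = 1 := by omega
  rw [hlast, s_even]
  have hsig1 : sigma1Pow2 1 = 1 := by rw [show (1:ℕ) = 2*0+1 by rfl, sig_odd]
  rw [hsig1]
  have : ∑ i ∈ Finset.range n,
      ((-1 : ℤ) ^ binDigitSum (2*i) * (sigma1Pow2 (2*n+1 - 2*i) : ℤ) +
       (-1 : ℤ) ^ binDigitSum (2*i+1) * (sigma1Pow2 (2*n+1 - (2*i+1)) : ℤ))
      = ∑ i ∈ Finset.range n, (-2) * ((-1 : ℤ) ^ binDigitSum i * (sigma1Pow2 (n-i) : ℤ)) := by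
    apply Finset.sum_congr rfl
    intro i hi
    simp only [Finset.mem_range] at hi
    have h1 : 2*n+1 - 2*i = 2*(n-i)+1 := by omega
    have h2 : 2*n+1 - (2*i+1) = 2*(n-i) := by omega
    rw [h1, h2, s_even, s_odd, sig_even (n-i) (by omega), sig_odd]
    push_cast
    ring
  rw [this, ← Finset.mul_sum]
  push_cast
  ring

lemma Fval (n : ℕ) (hn : 1 ≤ n) : F n = (-1 : ℤ) ^ (binDigitSum n - 1) * n := by
  induction n using Nat.strong_induction_on with
  | _ n ih =>
    have key : ∀ k, 1 ≤ k → (-1 : ℤ) ^ (binDigitSum k - 1) = -(-1 : ℤ) ^ binDigitSum k := by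
      intro k hk
      have h1 := s_pos k hk
      have : binDigitSum k = (binDigitSum k - 1) + 1 := by omega
      rw [this, Nat.add_sub_cancel, pow_succ]
      ring
    rcases Nat.even_or_odd n with ⟨m, hm⟩ | ⟨m, hm⟩
    · have hm2 : n = 2*m := by omega
      subst hm2
      have hm1 : 1 ≤ m := by omega
      rw [Feven m hm1, ih m (by omega) hm1, s_even]
      push_cast; ring
    · have hm2 : n = 2*m+1 := by omega
      subst hm2
      rcases Nat.eq_zero_or_pos m with h0 | h1
      · subst h0
        have hs1 : binDigitSum 1 = 1 := by rw [show (1:ℕ) = 2*0+1 by rfl, s_odd, s_zero]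
        have hsig1 : sigma1Pow2 1 = 1 := by rw [show (1:ℕ) = 2*0+1 by rfl, sig_odd]
        norm_num [F, Finset.sum_range_one, s_zero, hs1, hsig1]
      · rw [Fodd, ih m (by omega) h1, key m h1, s_odd]
        push_cast
        ring_nf

/-- `∑_{j=1}^{n} (-1)^{s(n-j)} σ_1^{(A)}(j) = (-1)^{s(n)-1} n` for all `n ≥ 1`. -/
theorem stmt_17 (n : ℕ) (hn : 1 ≤ n) :
    ∑ j ∈ Finset.Icc 1 n, (-1 : ℤ) ^ binDigitSum (n - j) * (sigma1Pow2 j : ℤ)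
      = (-1 : ℤ) ^ (binDigitSum n - 1) * (n : ℤ) := by
  rw [← Fval n hn]
  unfold F
  apply Finset.sum_bij' (fun j _ => n - j) (fun m _ => n - m)
  · intro j hj; simp only [Finset.mem_Icc] at hj; simp only [Finset.mem_range]; omega
  · intro m hm; simp only [Finset.mem_range] at hm; simp only [Finset.mem_Icc]; omega
  · intro j hj; simp only [Finset.mem_Icc] at hj; omega
  · intro m hm; simp only [Finset.mem_range] at hm; omega
  · intro j hj; simp only [Finset.mem_Icc] at hj
    rw [show n - (n - j) = j by omega]
end

section
/- Let A be the infinite sequence of powers of 2, and for real x let σ_x^{(A)}(n) = ∑_{j≥0, 2^j | n} 2^{jx}. Write n = 2^{α_1 - 1} + … + 2^{α_m - 1} with α_1 < … < α_m (binary expansion). Then σ_x^{(A)}(n) = (-1)^{s(2n+1)} (2^{(α_1-1)x} + … + 2^{(α_m-1)x}) - ∑_{j=1}^{n-1} (-1)^{s(n-j)} σ_x^{(A)}(j), where s is the binary digit sum and m = s(n). -/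
/-- `σ_x^{(A)}(n) = ∑_{j ≥ 0, 2^j ∣ n} 2^{jx} = ∑_{j=0}^{v_2(n)} 2^{jx}`, for the infinite
sequence `A` of powers of `2`. -/
noncomputable def sigmaPow2 (x : ℝ) (n : ℕ) : ℝ :=
  ∑ j ∈ Finset.range (padicValNat 2 n + 1), (2 : ℝ) ^ ((j : ℝ) * x)

lemma binDigitSum_rec (n : ℕ) : binDigitSum n = n % 2 + binDigitSum (n / 2) := by
  rcases Nat.eq_zero_or_pos n with rfl | hn
  · simp [binDigitSum]
  · unfold binDigitSum
    rw [Nat.digits_def' (by norm_num) hn, List.sum_cons]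

lemma binDigitSum_mul_pow_add (i : ℕ) : ∀ q r : ℕ, r < 2 ^ i →
    binDigitSum (q * 2 ^ i + r) = binDigitSum q + binDigitSum r := by
  induction i with
  | zero => intro q r hr; interval_cases r; simp [binDigitSum]
  | succ i ih =>
    intro q r hr
    rw [binDigitSum_rec (q * 2 ^ (i + 1) + r), binDigitSum_rec r]
    have e : q * 2 ^ (i + 1) = 2 * (q * 2 ^ i) := by ring
    have h1 : (q * 2 ^ (i + 1) + r) % 2 = r % 2 := by omega
    have h2 : (q * 2 ^ (i + 1) + r) / 2 = q * 2 ^ i + r / 2 := by omega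
    have h3 : r / 2 < 2 ^ i := by
      rw [pow_succ] at hr; omega
    rw [h1, h2, ih q (r / 2) h3]
    ring

/-- Alternating-sum of `(-1)^{s(m)}` over `m < q`. -/
lemma key_sum (q : ℕ) : ∑ m ∈ Finset.range q, (-1 : ℝ) ^ binDigitSum m =
    if q % 2 = 1 then -(-1 : ℝ) ^ binDigitSum q else 0 := by
  induction q with
  | zero => simp
  | succ q ih =>
    rw [Finset.sum_range_succ, ih]
    have hs : binDigitSum (q + 1) = (q + 1) % 2 + binDigitSum ((q + 1) / 2) :=
      binDigitSum_rec _
    have hs' : binDigitSum q = q % 2 + binDigitSum (q / 2) := binDigitSum_rec _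
    rcases Nat.even_or_odd q with he | ho
    · have h1 : q % 2 = 0 := Nat.even_iff.mp he
      have h2 : (q + 1) % 2 = 1 := by omega
      have h3 : (q + 1) / 2 = q / 2 := by omega
      rw [if_neg (by omega), if_pos h2, hs, hs', h1, h2, h3]
      rw [pow_add, pow_add]
      ring
    · have h1 : q % 2 = 1 := Nat.odd_iff.mp ho
      have h2 : (q + 1) % 2 = 0 := by omega
      rw [if_pos h1, if_neg (by omega)]
      ring

lemma mult_sum (N d : ℕ) (hd : 0 < d) (h : ℕ → ℝ) :
    ∑ j ∈ Finset.Icc 1 N, (if d ∣ j then h j else 0) =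
      ∑ k ∈ Finset.Icc 1 (N / d), h (d * k) := by
  rw [← Finset.sum_filter]
  apply Finset.sum_nbij' (fun j => j / d) (fun k => d * k)
  · intro j hj
    simp only [Finset.mem_filter, Finset.mem_Icc] at hj ⊢
    obtain ⟨⟨h1, h2⟩, hdvd⟩ := hj
    constructor
    · rcases hdvd with ⟨c, rfl⟩
      rw [Nat.mul_div_cancel_left _ hd]
      rcases Nat.eq_zero_or_pos c with rfl | hc
      · omega
      · exact hc
    · exact Nat.div_le_div_right h2
  · intro k hk
    simp only [Finset.mem_filter, Finset.mem_Icc] at hk ⊢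
    obtain ⟨h1, h2⟩ := hk
    refine ⟨⟨Nat.mul_pos hd (by omega), ?_⟩, Dvd.intro k rfl⟩
    calc d * k ≤ d * (N / d) := Nat.mul_le_mul_left d h2
    _ ≤ N := Nat.mul_div_le N d
  · intro j hj
    simp only [Finset.mem_filter] at hj
    exact Nat.mul_div_cancel' hj.2
  · intro k _
    exact Nat.mul_div_cancel_left k hd
  · intro j hj
    simp only [Finset.mem_filter] at hj
    rw [Nat.mul_div_cancel' hj.2]

lemma split_top (F : ℕ → ℝ) (n : ℕ) (hn : 1 ≤ n) :
    ∑ j ∈ Finset.Icc 1 n, F j = (∑ j ∈ Finset.Icc 1 (n - 1), F j) + F n := by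
  obtain ⟨m, rfl⟩ : ∃ m, n = m + 1 := ⟨n - 1, by omega⟩
  rw [Finset.sum_Icc_succ_top (by omega)]
  simp

/-- With `n = 2^{α_1-1} + … + 2^{α_m-1}` (binary expansion, so the `α_j - 1` are the set
bit positions of `n`):
`σ_x^{(A)}(n) = (-1)^{s(2n+1)}(2^{(α_1-1)x}+…+2^{(α_m-1)x}) - ∑_{j=1}^{n-1}(-1)^{s(n-j)} σ_x^{(A)}(j)`. -/
theorem stmt_18 (x : ℝ) (n : ℕ) (hn : 1 ≤ n) :
    sigmaPow2 x n =
      (-1 : ℝ) ^ binDigitSum (2 * n + 1) *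
        (∑ i ∈ Finset.range (n + 1), if n.testBit i then (2 : ℝ) ^ ((i : ℝ) * x) else 0)
      - ∑ j ∈ Finset.Icc 1 (n - 1), (-1 : ℝ) ^ binDigitSum (n - j) * sigmaPow2 x j := by
  have hs2n1 : binDigitSum (2 * n + 1) = binDigitSum n + 1 := by
    rw [binDigitSum_rec (2 * n + 1)]
    have h1 : (2 * n + 1) % 2 = 1 := by omega
    have h2 : (2 * n + 1) / 2 = n := by omega
    rw [h1, h2]; omega
  -- the main sum identity over Icc 1 n
  have main : ∑ j ∈ Finset.Icc 1 n, (-1 : ℝ) ^ binDigitSum (n - j) * sigmaPow2 x j =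
      (-1 : ℝ) ^ (binDigitSum n + 1) *
        (∑ i ∈ Finset.range (n + 1), if n.testBit i then (2 : ℝ) ^ ((i : ℝ) * x) else 0) := by
    -- rewrite sigmaPow2 x j as a sum over range (n+1)
    have hsig : ∀ j ∈ Finset.Icc 1 n, (-1 : ℝ) ^ binDigitSum (n - j) * sigmaPow2 x j =
        ∑ i ∈ Finset.range (n + 1),
          (if 2 ^ i ∣ j then (-1 : ℝ) ^ binDigitSum (n - j) * (2 : ℝ) ^ ((i : ℝ) * x) else 0) := by
      intro j hj
      simp only [Finset.mem_Icc] at hj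
      have hj0 : j ≠ 0 := by omega
      have hdvd : ∀ i, 2 ^ i ∣ j ↔ i ≤ padicValNat 2 j := fun i =>
        @padicValNat_dvd_iff_le 2 ⟨Nat.prime_two⟩ j i hj0
      rw [sigmaPow2, Finset.mul_sum, ← Finset.sum_filter]
      apply Finset.sum_congr _ (fun _ _ => rfl)
      ext i
      simp only [Finset.mem_filter, Finset.mem_range]
      constructor
      · intro hi
        have hle : 2 ^ padicValNat 2 j ≤ j := Nat.le_of_dvd (by omega) pow_padicValNat_dvd
        have hlt := Nat.lt_two_pow_self (n := padicValNat 2 j)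
        exact ⟨by omega, (hdvd i).mpr (by omega)⟩
      · rintro ⟨-, hd⟩
        have := (hdvd i).mp hd
        omega
    rw [Finset.sum_congr rfl hsig, Finset.sum_comm, Finset.mul_sum]
    -- evaluate the inner sum for each i
    apply Finset.sum_congr rfl
    intro i _
    rw [mult_sum n (2 ^ i) (Nat.pow_pos (n := i) (by norm_num))]
    set q := n / 2 ^ i with hq
    set r := n % 2 ^ i with hr
    have hn_eq : n = q * 2 ^ i + r := by
      rw [hq, hr]; exact (Nat.div_add_mod' n (2 ^ i)).symm
    have hr_lt : r < 2 ^ i := Nat.mod_lt _ (Nat.pow_pos (n := i) (by norm_num))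
    have hsub : ∀ k ∈ Finset.Icc 1 q,
        (-1 : ℝ) ^ binDigitSum (n - 2 ^ i * k) * (2 : ℝ) ^ ((i : ℝ) * x) =
        (-1 : ℝ) ^ binDigitSum r * (2 : ℝ) ^ ((i : ℝ) * x) *
          (-1 : ℝ) ^ binDigitSum (q - k) := by
      intro k hk
      simp only [Finset.mem_Icc] at hk
      have e1 : k * 2 ^ i ≤ q * 2 ^ i := Nat.mul_le_mul_right _ hk.2
      have e2 : (q - k) * 2 ^ i = q * 2 ^ i - k * 2 ^ i := Nat.sub_mul q k (2 ^ i)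
      have e3 : 2 ^ i * k = k * 2 ^ i := Nat.mul_comm _ _
      have heq : n - 2 ^ i * k = (q - k) * 2 ^ i + r := by omega
      rw [heq, binDigitSum_mul_pow_add i (q - k) r hr_lt, pow_add]
      ring
    rw [Finset.sum_congr rfl hsub]
    have hreflect : ∑ k ∈ Finset.Icc 1 q, (-1 : ℝ) ^ binDigitSum r *
          (2 : ℝ) ^ ((i : ℝ) * x) * (-1 : ℝ) ^ binDigitSum (q - k) =
        (-1 : ℝ) ^ binDigitSum r * (2 : ℝ) ^ ((i : ℝ) * x) *
          ∑ m ∈ Finset.range q, (-1 : ℝ) ^ binDigitSum m := by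
      rw [Finset.mul_sum,
        ← Finset.sum_range_reflect (fun m => (-1 : ℝ) ^ binDigitSum r *
          (2 : ℝ) ^ ((i : ℝ) * x) * (-1 : ℝ) ^ binDigitSum m) q]
      apply Finset.sum_nbij' (fun k => k - 1) (fun m => m + 1)
      · intro k hk
        simp only [Finset.mem_Icc] at hk
        simp only [Finset.mem_range]; omega
      · intro m hm
        simp only [Finset.mem_range] at hm
        simp only [Finset.mem_Icc]; omega
      · intro k hk
        simp only [Finset.mem_Icc] at hk; omega
      · intro m _; omega
      · intro k hk
        simp only [Finset.mem_Icc] at hk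
        have h4 : q - 1 - (k - 1) = q - k := by omega
        rw [h4]
    rw [hreflect, key_sum]
    have htb : n.testBit i = decide (q % 2 = 1) := Nat.testBit_eq_decide_div_mod_eq
    have hsn : binDigitSum n = binDigitSum q + binDigitSum r := by
      conv_lhs => rw [hn_eq]
      rw [binDigitSum_mul_pow_add i q r hr_lt]
    by_cases hq2 : q % 2 = 1
    · rw [if_pos hq2, htb, if_pos (by simp [hq2]), hsn, pow_succ, pow_add]
      ring
    · rw [if_neg hq2, htb, if_neg (by simp [hq2])]
      ring
  rw [hs2n1, ← main,
    split_top (fun j => (-1 : ℝ) ^ binDigitSum (n - j) * sigmaPow2 x j) n hn]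
  have h0 : binDigitSum 0 = 0 := by simp [binDigitSum]
  simp only [Nat.sub_self, h0, pow_zero, one_mul]
  ring
end
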